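/- arXiv:math/9309203 — 5 statements merged into one kernel-verified Lean document; each statement's English description precedes it below -/
import Mathlib

section
/- A point x in a compact Hausdorff dynamical system (X, T) is recurrent (i.e., for every neighborhood G of x there are infinitely many n with T^n(x) ∈ G) if and only if there is a nonprincipal ultrafilter U on ℕ with T^U(x) = x. -/
open Filter

/-- A point `x` in a compact Hausdorff dynamical system is recurrent iff
`T^U(x) = x` for some nonprincipal ultrafilter `U`. -/
theorem recurrent_iff_ulim_fixed {X : Type*} [TopologicalSpace X] [CompactSpace X] [T2Space X]
    (T : X → X) (hT : Continuous T) (x : X) :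
    (∀ G ∈ nhds x, {n : ℕ | T^[n] x ∈ G}.Infinite) ↔
      ∃ U : Ultrafilter ℕ, (¬ ∃ a : ℕ, U = pure a) ∧
        Tendsto (fun n => T^[n] x) U (nhds x) := by
  constructor
  · intro h
    set F : Filter ℕ := comap (fun n => T^[n] x) (nhds x) ⊓ cofinite with hF
    have hne : F.NeBot := by
      rw [hF, Filter.inf_neBot_iff]
      intro s hs t ht
      rw [mem_comap] at hs
      obtain ⟨G, hG, hGs⟩ := hs
      rcases ((h G hG).diff (by simpa using Filter.mem_cofinite.mp ht)).nonempty with ⟨n, hn⟩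
      exact ⟨n, hGs hn.1, by simpa using hn.2⟩
    obtain ⟨U, hU⟩ := Filter.exists_ultrafilter_le F
    refine ⟨U, ?_, ?_⟩
    · rintro ⟨a, rfl⟩
      have h2 : ({a}ᶜ : Set ℕ) ∈ (pure a : Ultrafilter ℕ) :=
        (hU.trans inf_le_right) ((Set.finite_singleton a).compl_mem_cofinite)
      simp at h2
    · exact tendsto_iff_comap.mpr (hU.trans inf_le_left)
  · rintro ⟨U, hU, hT'⟩ G hG
    have hcof : (U : Filter ℕ) ≤ cofinite := (U.le_cofinite_or_eq_pure).resolve_right hU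
    have hmem : {n : ℕ | T^[n] x ∈ G} ∈ U := hT' hG
    by_contra hfin
    rw [Set.not_infinite] at hfin
    exact U.compl_notMem hmem (hcof hfin.compl_mem_cofinite)
end

section
/- A point x in a compact Hausdorff dynamical system (X, T) is uniformly recurrent (for each neighborhood G of x there is M ∈ ℕ such that for all n there exists k < M with T^(n+k)(x) ∈ G) if and only if for every ultrafilter V on ℕ there is an ultrafilter U on ℕ with T^U(T^V(x)) = x. -/
open Filter

/-- A point `x` in a compact Hausdorff dynamical system is uniformly recurrent iff
for every ultrafilter `V` there is an ultrafilter `U` with `T^U(T^V(x)) = x`. -/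
theorem uniformlyRecurrent_iff {X : Type*} [TopologicalSpace X] [CompactSpace X] [T2Space X]
    (T : X → X) (hT : Continuous T) (x : X) :
    (∀ G ∈ nhds x, ∃ M : ℕ, ∀ n : ℕ, ∃ k < M, T^[n + k] x ∈ G) ↔
      ∀ V : Ultrafilter ℕ, ∃ U : Ultrafilter ℕ, ∃ y : X,
        Tendsto (fun n => T^[n] x) V (nhds y) ∧
        Tendsto (fun n => T^[n] y) U (nhds x) := by
  constructor
  · intro h V
    set F : Ultrafilter X := V.map (fun n => T^[n] x) with hF
    have hy : Tendsto (fun n => T^[n] x) V (nhds F.lim) := F.le_nhds_lim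
    set y := F.lim
    -- Key claim: every neighborhood of x contains some point of the orbit of y
    have key : ∀ W ∈ nhds x, ∃ k : ℕ, T^[k] y ∈ W := by
      intro W hW
      obtain ⟨G, hGx, hGc, hGW⟩ := exists_mem_nhds_isClosed_subset hW
      obtain ⟨M, hM⟩ := h G hGx
      have hunion : (⋃ k ∈ (↑(Finset.range M) : Set ℕ), {n : ℕ | T^[n + k] x ∈ G}) ∈ V := by
        have : (⋃ k ∈ (↑(Finset.range M) : Set ℕ), {n : ℕ | T^[n + k] x ∈ G}) = Set.univ := by
          ext n
          simp only [Set.mem_iUnion, Set.mem_univ, iff_true, Finset.mem_coe,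
            Finset.mem_range]
          obtain ⟨k, hk, hkg⟩ := hM n
          exact ⟨k, hk, hkg⟩
        rw [this]; exact Filter.univ_mem
      rw [Ultrafilter.finite_biUnion_mem_iff (Finset.range M).finite_toSet] at hunion
      obtain ⟨k, _, hkV⟩ := hunion
      refine ⟨k, hGW ?_⟩
      have hcont : Tendsto (fun n => T^[k] (T^[n] x)) V (nhds (T^[k] y)) :=
        ((hT.iterate k).tendsto y).comp hy
      have heq : ∀ n : ℕ, T^[k] (T^[n] x) = T^[n + k] x := by
        intro n
        rw [add_comm, Function.iterate_add_apply]
      have hcont' : Tendsto (fun n => T^[n + k] x) V (nhds (T^[k] y)) := by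
        simpa only [heq] using hcont
      exact hGc.mem_of_tendsto hcont' (Filter.eventually_iff.mpr hkV)
    have hne : (Filter.comap (fun k => T^[k] y) (nhds x)).NeBot := by
      rw [Filter.comap_neBot_iff]
      intro W hW
      obtain ⟨k, hk⟩ := key W hW
      exact ⟨k, hk⟩
    haveI := hne
    refine ⟨Ultrafilter.of (Filter.comap (fun k => T^[k] y) (nhds x)), y, hy, ?_⟩
    exact tendsto_comap.mono_left (Ultrafilter.of_le _)
  · intro h
    by_contra hcon
    push_neg at hcon
    obtain ⟨G, hGx, hG⟩ := hcon
    have hGo : interior G ∈ nhds x := interior_mem_nhds.mpr hGx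
    choose n hn using hG
    have hn' : ∀ M k, k < M → T^[n M + k] x ∉ interior G := by
      intro M k hk hmem
      exact hn M k hk (interior_subset hmem)
    set W : Ultrafilter ℕ := Filter.hyperfilter ℕ
    obtain ⟨U, y, hy1, hy2⟩ := h (W.map n)
    have horbit : ∀ k : ℕ, T^[k] y ∉ interior G := by
      intro k
      have hy1' : Tendsto (fun M => T^[n M] x) W (nhds y) := hy1
      have hcont : Tendsto (fun M => T^[k] (T^[n M] x)) W (nhds (T^[k] y)) :=
        ((hT.iterate k).tendsto y).comp hy1'
      have heq : ∀ M : ℕ, T^[k] (T^[n M] x) = T^[n M + k] x := by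
        intro M
        rw [add_comm, Function.iterate_add_apply]
      have hcont' : Tendsto (fun M => T^[n M + k] x) W (nhds (T^[k] y)) := by
        simpa only [heq] using hcont
      have hev : ∀ᶠ M in (W : Filter ℕ), T^[n M + k] x ∈ (interior G)ᶜ := by
        have hcof : {M : ℕ | k < M} ∈ (W : Filter ℕ) := by
          refine Filter.hyperfilter_le_cofinite ?_
          have : {M : ℕ | k < M}ᶜ ⊆ Set.Iic k := by
            intro M hM
            simpa using hM
          exact Set.Finite.subset (Set.finite_Iic k) this
        filter_upwards [hcof] with M hM
        exact hn' M k hM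
      exact (isOpen_interior.isClosed_compl).mem_of_tendsto hcont' hev
    have hmem : {k : ℕ | T^[k] y ∈ interior G} ∈ U := hy2 hGo
    obtain ⟨k, hk⟩ := U.neBot.nonempty_of_mem hmem
    exact horbit k hk
end

section
/- Two points x, y in a compact Hausdorff dynamical system (X, T) are proximal (for every neighborhood G of the diagonal in X × X, infinitely many n satisfy (T^n(x), T^n(y)) ∈ G) if and only if there is an ultrafilter U on ℕ with T^U(x) = T^U(y). -/
open Filter

/-- Two points `x, y` in a compact Hausdorff dynamical system are proximal iff
`T^U(x) = T^U(y)` for some ultrafilter `U`. -/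
theorem proximal_iff {X : Type*} [TopologicalSpace X] [CompactSpace X] [T2Space X]
    (T : X → X) (hT : Continuous T) (x y : X) :
    (∀ G ∈ nhdsSet (Set.diagonal X), {n : ℕ | (T^[n] x, T^[n] y) ∈ G}.Infinite) ↔
      ∃ U : Ultrafilter ℕ, ∃ z : X,
        Tendsto (fun n => T^[n] x) U (nhds z) ∧
        Tendsto (fun n => T^[n] y) U (nhds z) := by
  set f : ℕ → X × X := fun n => (T^[n] x, T^[n] y) with hf
  constructor
  · intro h
    set F : Filter ℕ := comap f (nhdsSet (Set.diagonal X)) with hF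
    have hne : F.NeBot := Filter.comap_neBot (fun t ht => (h t ht).nonempty)
    set U := Ultrafilter.of F with hU
    have hUF : (U : Filter ℕ) ≤ F := Ultrafilter.of_le F
    obtain ⟨p, -, hp⟩ := isCompact_univ.ultrafilter_le_nhds (U.map f) (by simp)
    have hTp : Tendsto f U (nhds p) := hp
    have hpd : p ∈ Set.diagonal X := by
      by_contra hpd
      obtain ⟨A, B, hAo, hBo, hAs, hBs, hAB⟩ :=
        SeparatedNhds.of_isCompact_isClosed
          (isClosed_diagonal.isCompact) isClosed_singleton
          (Set.disjoint_singleton_right.mpr hpd)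
      have h1 : f ⁻¹' A ∈ U := hUF (preimage_mem_comap (hAo.mem_nhdsSet.mpr hAs))
      have h2 : f ⁻¹' B ∈ U := hTp (hBo.mem_nhds (hBs rfl))
      have : (f ⁻¹' A ∩ f ⁻¹' B).Nonempty := Ultrafilter.nonempty_of_mem (inter_mem h1 h2)
      obtain ⟨n, hnA, hnB⟩ := this
      exact hAB.ne_of_mem hnA hnB rfl
    obtain ⟨z1, z2⟩ := p
    have hz : z1 = z2 := hpd
    refine ⟨U, z1, (continuous_fst.tendsto _).comp hTp, ?_⟩
    have := (continuous_snd.tendsto _).comp hTp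
    simpa [← hz, hf, Function.comp_def] using this
  · rintro ⟨U, z, hx, hy⟩
    intro G hG
    have hmem : {n : ℕ | f n ∈ G} ∈ U := by
      have hdiag : Tendsto f U (nhds (z, z)) := hx.prodMk_nhds hy
      exact hdiag (nhds_le_nhdsSet (show ((z, z) : X × X) ∈ Set.diagonal X from rfl) hG)
    by_cases hcase : ∃ m, T^[m] x = T^[m] y
    · obtain ⟨m, hm⟩ := hcase
      have hsub : Set.Ici m ⊆ {n : ℕ | f n ∈ G} := by
        intro k hk
        have heq : T^[k] x = T^[k] y := by
          obtain ⟨j, rfl⟩ := Nat.exists_eq_add_of_le hk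
          rw [Nat.add_comm, Function.iterate_add_apply, Function.iterate_add_apply, hm]
        exact subset_of_mem_nhdsSet hG (show f k ∈ Set.diagonal X from heq)
      exact (Set.Ici_infinite m).mono hsub
    · by_contra hfin
      rw [Set.not_infinite] at hfin
      obtain ⟨n, -, hn⟩ := Ultrafilter.eq_pure_of_finite_mem hfin hmem
      have hx' : T^[n] x = z :=
        tendsto_nhds_unique (tendsto_pure_nhds _ _) (by rw [hn] at hx; exact hx)
      have hy' : T^[n] y = z :=
        tendsto_nhds_unique (tendsto_pure_nhds _ _) (by rw [hn] at hy; exact hy)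
      exact hcase ⟨n, hx'.trans hy'.symm⟩
end

section
/- There exists a nonprincipal idempotent ultrafilter U on ℕ, i.e., a nonprincipal U with U + U = U. -/
attribute [local instance] Ultrafilter.add

/-- The sum of two ultrafilters on ℕ:
`X ∈ uadd U V ↔ {m | {n | m + n ∈ X} ∈ V} ∈ U`. -/
def uadd (U V : Ultrafilter ℕ) : Ultrafilter ℕ :=
  Ultrafilter.bind U (fun m => Ultrafilter.map (fun n => m + n) V)

lemma uadd_eq_add (U V : Ultrafilter ℕ) : uadd U V = U + V := by
  apply Ultrafilter.coe_injective
  ext X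
  constructor
  · intro h
    exact (Ultrafilter.eventually_add U V (· ∈ X)).mpr h
  · intro h
    exact (Ultrafilter.eventually_add U V (· ∈ X)).mp h

lemma FS_pos (a : Stream' ℕ) (ha : ∀ n, 0 < a n) : ∀ m ∈ Hindman.FS a, 0 < m := by
  intro m hm
  induction hm with
  | head' b => exact ha 0
  | tail' b m h ih => exact ih (fun n => ha (n+1))
  | cons' b m h ih => exact Nat.lt_of_lt_of_le (ha 0) (Nat.le_add_right _ _)

/-- There exists a nonprincipal idempotent ultrafilter on ℕ. -/
theorem exists_nonprincipal_idempotent :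
    ∃ U : Ultrafilter ℕ, (¬ ∃ a : ℕ, U = pure a) ∧ uadd U U = U := by
  obtain ⟨U, hidem, hFS⟩ :=
    Hindman.exists_idempotent_ultrafilter_le_FS (fun n => n + 1 : Stream' ℕ)
  refine ⟨U, ?_, by rw [uadd_eq_add]; exact hidem⟩
  rintro ⟨a, rfl⟩
  have ha : 0 < a := FS_pos _ (fun n => Nat.succ_pos n) a hFS
  have h2 : (pure a : Ultrafilter ℕ) + pure a = pure (a + a) := by
    apply Ultrafilter.coe_injective
    ext X
    simpa [Ultrafilter.mem_pure, Filter.eventually_iff, Set.setOf_mem_eq] using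
      Ultrafilter.eventually_add (pure a) (pure a) (· ∈ X)
  rw [h2] at hidem
  have h3 := congrArg (fun V : Ultrafilter ℕ => ({a} : Set ℕ) ∈ V) hidem
  simp only [Ultrafilter.mem_pure, Set.mem_singleton_iff] at h3
  simp only [eq_iff_iff, iff_true] at h3
  omega
end

section
/- Auslander–Ellis theorem: in any compact Hausdorff dynamical system (X, T), for every x ∈ X there exists a uniformly recurrent point y that is proximal to x. -/
open Filter

/-- Auslander–Ellis theorem: every point of a compact Hausdorff dynamical system
is proximal to a uniformly recurrent point. -/
theorem auslander_ellis {X : Type*} [TopologicalSpace X] [CompactSpace X] [T2Space X]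
    (T : X → X) (hT : Continuous T) (x : X) :
    ∃ y : X,
      (∀ G ∈ nhds y, ∃ M : ℕ, ∀ n : ℕ, ∃ k < M, T^[n + k] y ∈ G) ∧
      (∀ G ∈ nhdsSet (Set.diagonal X), {n : ℕ | (T^[n] x, T^[n] y) ∈ G}.Infinite) := by
  classical
  -- the (strict) orbit closure of x
  set C : Set X := closure {z | ∃ n, 1 ≤ n ∧ T^[n] x = z} with hC
  have hCclosed : IsClosed C := isClosed_closure
  have hCne : C.Nonempty := ⟨T x, subset_closure ⟨1, le_refl 1, rfl⟩⟩
  have hCinv : Set.MapsTo T C C := by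
    intro z hz
    have h1 : T '' C ⊆ closure (T '' {z | ∃ n, 1 ≤ n ∧ T^[n] x = z}) :=
      image_closure_subset_closure_image hT
    have h2 : T '' {z | ∃ n, 1 ≤ n ∧ T^[n] x = z} ⊆ {z | ∃ n, 1 ≤ n ∧ T^[n] x = z} := by
      rintro w ⟨v, ⟨n, hn, rfl⟩, rfl⟩
      exact ⟨n + 1, by omega, by rw [Nat.add_comm, Function.iterate_add_apply, Function.iterate_one]⟩
    have := h1.trans (closure_mono h2)
    exact this ⟨z, hz, rfl⟩
  -- Zorn: a minimal nonempty closed invariant subset K of C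
  set Good : Set (Set X) := {K | K.Nonempty ∧ IsClosed K ∧ Set.MapsTo T K K ∧ K ⊆ C} with hGood
  obtain ⟨K, -, hKmin⟩ : ∃ K, K ⊆ C ∧ Minimal (· ∈ Good) K := by
    refine zorn_superset_nonempty Good ?_ C ⟨hCne, hCclosed, hCinv, le_refl C⟩
    intro c hcG hc hcne
    haveI : Nonempty c := hcne.to_subtype
    have hdir : DirectedOn (· ⊇ ·) c := IsChain.directedOn hc.symm
    have hne : (⋂₀ c).Nonempty :=
      IsCompact.nonempty_sInter_of_directed_nonempty_isCompact_isClosed hdir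
        (fun U hU => (hcG hU).1) (fun U hU => (hcG hU).2.1.isCompact)
        (fun U hU => (hcG hU).2.1)
    refine ⟨⋂₀ c, ⟨hne, isClosed_sInter fun U hU => (hcG hU).2.1, ?_, ?_⟩,
      fun s hs => Set.sInter_subset_of_mem hs⟩
    · intro z hz
      intro U hU
      exact (hcG hU).2.2.1 (hz U hU)
    · obtain ⟨U, hU⟩ := hcne
      exact (Set.sInter_subset_of_mem hU).trans (hcG hU).2.2.2
  obtain ⟨hKne, hKclosed, hKinv, hKC⟩ := hKmin.prop
  -- the Ellis-type semigroup: closure of {T^[n] : n ≥ 1} in X → X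
  set S1 : Set (X → X) := {f | ∃ n, 1 ≤ n ∧ f = T^[n]} with hS1
  set E1 : Set (X → X) := closure S1 with hE1
  have hE1closed : IsClosed E1 := isClosed_closure
  have hE1compact : IsCompact E1 := hE1closed.isCompact
  -- left composition with T^[N] maps the closure of {T^[n] : n ≥ m} into
  -- the closure of {T^[n] : n ≥ N + m}
  have hstep : ∀ N m : ℕ, ∀ q ∈ closure {f : X → X | ∃ n, m ≤ n ∧ f = T^[n]},
      T^[N] ∘ q ∈ closure {f : X → X | ∃ n, N + m ≤ n ∧ f = T^[n]} := by
    intro N m q hq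
    have hcont : Continuous fun g : X → X => T^[N] ∘ g :=
      continuous_pi fun z => (hT.iterate N).comp (continuous_apply z)
    have h1 : T^[N] ∘ q ∈ closure ((fun g => T^[N] ∘ g) '' {f : X → X | ∃ n, m ≤ n ∧ f = T^[n]}) :=
      (image_closure_subset_closure_image hcont) ⟨q, hq, rfl⟩
    refine closure_mono ?_ h1
    rintro w ⟨g, ⟨n, hn, rfl⟩, rfl⟩
    exact ⟨N + n, by omega, (Function.iterate_add T N n).symm⟩
  -- E1 is a subsemigroup under composition
  have hEcomp : ∀ p ∈ E1, ∀ q ∈ E1, p ∘ q ∈ E1 := by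
    intro p hp q hq
    have hgen : ∀ f ∈ S1, f ∘ q ∈ E1 := by
      rintro f ⟨n, hn, rfl⟩
      have := hstep n 1 q hq
      refine closure_mono ?_ this
      rintro w ⟨m, hm, rfl⟩
      exact ⟨m, by omega, rfl⟩
    have hcont : Continuous fun g : X → X => g ∘ q :=
      continuous_pi fun z => continuous_apply (q z)
    have h1 : p ∘ q ∈ closure ((fun g : X → X => g ∘ q) '' S1) :=
      (image_closure_subset_closure_image hcont) ⟨p, hp, rfl⟩
    have h2 : (fun g : X → X => g ∘ q) '' S1 ⊆ E1 := by
      rintro w ⟨f, hf, rfl⟩; exact hgen f hf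
    exact closure_minimal h2 hE1closed h1
  -- elements of E1 map K into K
  have hEK : ∀ p ∈ E1, ∀ k ∈ K, p k ∈ K := by
    intro p hp k hk
    have hcl : IsClosed {f : X → X | f k ∈ K} := hKclosed.preimage (continuous_apply k)
    have hsub : S1 ⊆ {f : X → X | f k ∈ K} := by
      rintro f ⟨n, hn, rfl⟩
      exact hKinv.iterate n hk
    exact closure_minimal hsub hcl hp
  -- K is contained in the image of E1 under evaluation at x
  have hKreach : K ⊆ (fun f : X → X => f x) '' E1 := by
    have hcont : Continuous fun f : X → X => f x := continuous_apply x
    have himcl : IsClosed ((fun f : X → X => f x) '' E1) :=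
      (hE1compact.image hcont).isClosed
    have hsub : {z | ∃ n, 1 ≤ n ∧ T^[n] x = z} ⊆ (fun f : X → X => f x) '' E1 := by
      rintro z ⟨n, hn, rfl⟩
      exact ⟨T^[n], subset_closure ⟨n, hn, rfl⟩, rfl⟩
    exact hKC.trans (closure_minimal hsub himcl)
  -- the compact subsemigroup S of elements sending x into K
  set S : Set (X → X) := {p ∈ E1 | p x ∈ K} with hS
  have hSclosed : IsClosed S :=
    hE1closed.inter (hKclosed.preimage (continuous_apply x))
  have hSne : S.Nonempty := by
    obtain ⟨k, hk⟩ := hKne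
    obtain ⟨p, hp, hpx⟩ := hKreach hk
    exact ⟨p, hp, by rw [show p x = k from hpx]; exact hk⟩
  have hScomp : ∀ p ∈ S, ∀ q ∈ S, p ∘ q ∈ S := by
    rintro p ⟨hp, hpx⟩ q ⟨hq, hqx⟩
    exact ⟨hEcomp p hp q hq, hEK p hp _ hqx⟩
  -- get an idempotent u in S
  letI : Semigroup (X → X) :=
    { mul := fun f g => f ∘ g
      mul_assoc := fun _ _ _ => rfl }
  have hmul_left : ∀ r : X → X, Continuous (· * r) :=
    fun r => continuous_pi fun z => continuous_apply (r z)
  obtain ⟨u, huS, huu⟩ :=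
    exists_idempotent_in_compact_subsemigroup hmul_left S hSne hSclosed.isCompact hScomp
  obtain ⟨huE, huxK⟩ := huS
  have huu' : u ∘ u = u := huu
  set y : X := u x with hy
  have hyK : y ∈ K := huxK
  have huy : u y = y := by
    have : (u ∘ u) x = u x := congrFun huu' x
    simpa [hy] using this
  refine ⟨y, ?_, ?_⟩
  · -- uniform recurrence of y, from minimality of K
    intro G hG
    obtain ⟨V, hVG, hVopen, hyV⟩ := mem_nhds_iff.mp hG
    -- K is covered by the preimages of V under iterates
    have hcover : K ⊆ ⋃ k : ℕ, T^[k] ⁻¹' V := by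
      by_contra hcov
      rw [Set.not_subset] at hcov
      obtain ⟨z, hzK, hz⟩ := hcov
      set A : Set X := {w ∈ K | ∀ k : ℕ, T^[k] w ∉ V} with hA
      have hzA : z ∈ A := by
        refine ⟨hzK, fun k hk => hz ?_⟩
        exact Set.mem_iUnion.mpr ⟨k, hk⟩
      have hAGood : A ∈ Good := by
        refine ⟨⟨z, hzA⟩, ?_, ?_, (Set.sep_subset _ _).trans hKC⟩
        · have : A = K ∩ ⋂ k : ℕ, (T^[k] ⁻¹' V)ᶜ := by
            ext w
            simp [hA, Set.mem_iInter]
          rw [this]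
          exact hKclosed.inter (isClosed_iInter fun k =>
            (hVopen.preimage (hT.iterate k)).isClosed_compl)
        · rintro w ⟨hwK, hw⟩
          refine ⟨hKinv hwK, fun k hk => hw (k + 1) ?_⟩
          rwa [Function.iterate_add_apply, Function.iterate_one]
      have hAK : A = K := hKmin.eq_of_le hAGood (Set.sep_subset _ _)
      have : y ∈ A := hAK ▸ hyK
      exact this.2 0 (by simpa using hyV)
    obtain ⟨t, ht⟩ := hKclosed.isCompact.elim_finite_subcover
      (fun k : ℕ => T^[k] ⁻¹' V) (fun k => hVopen.preimage (hT.iterate k)) hcover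
    refine ⟨t.sup id + 1, fun n => ?_⟩
    have hny : T^[n] y ∈ K := hKinv.iterate n hyK
    obtain ⟨i, hit, hiV⟩ := Set.mem_iUnion₂.mp (ht hny)
    refine ⟨i, Nat.lt_succ_of_le (Finset.le_sup (f := id) hit), ?_⟩
    have : T^[i] (T^[n] y) ∈ V := hiV
    rw [← Function.iterate_add_apply, Nat.add_comm] at this
    exact hVG this
  · -- proximality of x and y
    intro G hG
    obtain ⟨U, hUopen, hdiagU, hUG⟩ := mem_nhdsSet_iff_exists.mp hG
    refine Set.infinite_of_forall_exists_gt fun N => ?_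
    -- T^[N+1] ∘ u lies in the closure of {T^[n] : n ≥ N+2}
    have hw : T^[N + 1] ∘ u ∈ closure {f : X → X | ∃ n, N + 2 ≤ n ∧ f = T^[n]} := by
      have := hstep (N + 1) 1 u huE
      exact this
    -- evaluate at (x, y): the value is on the diagonal, hence in U
    have hgcont : Continuous fun f : X → X => ((f x, f y) : X × X) :=
      (continuous_apply x).prodMk (continuous_apply y)
    have hwval : ((T^[N + 1] ∘ u) x, (T^[N + 1] ∘ u) y) ∈ U := by
      have h1 : (T^[N + 1] ∘ u) x = T^[N + 1] y := rfl
      have h2 : (T^[N + 1] ∘ u) y = T^[N + 1] y := by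
        simp [Function.comp, huy]
      rw [h1, h2]
      exact hdiagU rfl
    have hopen : IsOpen ((fun f : X → X => ((f x, f y) : X × X)) ⁻¹' U) :=
      hUopen.preimage hgcont
    have hmem : T^[N + 1] ∘ u ∈ (fun f : X → X => ((f x, f y) : X × X)) ⁻¹' U := hwval
    obtain ⟨f, hfpre, hfS⟩ := (mem_closure_iff.mp hw) _ hopen hmem
    obtain ⟨n, hn, rfl⟩ := hfS
    exact ⟨n, hUG hfpre, by omega⟩
end
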